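/- For every integer p and every non-negative integer n, the poly-Bernoulli numbers can be expressed through generalized harmonic numbers as B_n^{(p)} = Σ_{k=0}^{n} (-1)^{n-k} · {n+1, k+1} · k! · H_{k+1}^{(p)}, where {n+1, k+1} denotes the Stirling number of the second kind. The identity is an equality of rational numbers. -/

import Mathlib

/-- Unsigned Stirling numbers of the first kind: `[n, k]` counts permutations
of `n` elements with `k` disjoint cycles. -/
def stirlingFirst : ℕ → ℕ → ℕ
  | 0, 0 => 1
  | 0, _ + 1 => 0
  | _ + 1, 0 => 0
  | n + 1, k + 1 => n * stirlingFirst n (k + 1) + stirlingFirst n k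

/-- Stirling numbers of the second kind: `{n, k}` counts partitions of an
`n`-element set into `k` non-empty blocks. -/
def stirlingSecond : ℕ → ℕ → ℕ
  | 0, 0 => 1
  | 0, _ + 1 => 0
  | _ + 1, 0 => 0
  | n + 1, k + 1 => (k + 1) * stirlingSecond n (k + 1) + stirlingSecond n k

/-- Generalized harmonic number `H_n^(p) = ∑_{k=1}^n k^(-p)` as a rational number. -/
def genHarmonic (n : ℕ) (p : ℤ) : ℚ :=
  ∑ k ∈ Finset.Icc 1 n, ((k : ℚ)) ^ (-p)

/-- Poly-Bernoulli number `B_n^(p)`, via the explicit formula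
`B_n^(p) = ∑_{m=0}^n (-1)^(n+m) ⬝ m! ⬝ {n, m} / (m+1)^p`. -/
def polyBernoulli (p : ℤ) (n : ℕ) : ℚ :=
  ∑ m ∈ Finset.range (n + 1),
    (-1 : ℚ) ^ (n + m) * (Nat.factorial m) * (stirlingSecond n m) / ((m + 1 : ℚ)) ^ p

lemma stirlingSecond_eq_zero : ∀ {n k : ℕ}, n < k → stirlingSecond n k = 0 := by
  intro n
  induction n with
  | zero => intro k h; cases k with
    | zero => omega
    | succ k => rfl
  | succ n ih =>
    intro k h
    cases k with
    | zero => omega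
    | succ k =>
      have h1 : n < k + 1 := by omega
      have h2 : n < k := by omega
      simp only [stirlingSecond, ih h1, ih h2]
      omega

lemma stirlingSecond_self (n : ℕ) : stirlingSecond n n = 1 := by
  induction n with
  | zero => rfl
  | succ n ih =>
    simp [stirlingSecond, ih, stirlingSecond_eq_zero (Nat.lt_succ_self n)]

lemma key (n : ℕ) : ∀ d m : ℕ, m ≤ n → n - m = d →
    ∑ k ∈ Finset.Icc m n, (-1:ℚ)^k * (Nat.factorial k) * (stirlingSecond (n+1) (k+1)) =
      (-1:ℚ)^m * (Nat.factorial m) * (stirlingSecond n m) := by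
  intro d
  induction d with
  | zero =>
    intro m hm hd
    have : m = n := by omega
    subst this
    rw [Finset.Icc_self, Finset.sum_singleton, stirlingSecond_self, stirlingSecond_self]
  | succ d ih =>
    intro m hm hd
    have hmn : m < n := by omega
    have hins : Finset.Icc m n = insert m (Finset.Icc (m+1) n) := by
      ext x; simp [Finset.mem_Icc]; omega
    rw [hins, Finset.sum_insert (by simp)]
    rw [ih (m+1) (by omega) (by omega)]
    have hstep : stirlingSecond (n+1) (m+1)
        = (m+1) * stirlingSecond n (m+1) + stirlingSecond n m := by
      cases n with
      | zero => omega
      | succ n => rfl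
    rw [hstep]
    push_cast [Nat.factorial_succ, pow_succ]
    ring

theorem polyBernoulli_eq_sum_stirlingSecond_genHarmonic (p : ℤ) (n : ℕ) :
    polyBernoulli p n =
      ∑ k ∈ Finset.range (n + 1),
        (-1 : ℚ) ^ (n - k) * (stirlingSecond (n + 1) (k + 1) : ℚ) * (Nat.factorial k : ℚ) *
          genHarmonic (k + 1) p := by
  unfold polyBernoulli genHarmonic
  -- rewrite inner Icc sum as range sum and distribute
  have h0 : ∀ k : ℕ, (∑ j ∈ Finset.Icc 1 (k+1), ((j : ℚ)) ^ (-p))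
      = ∑ m ∈ Finset.range (k+1), (((m : ℚ) + 1) ^ (-p)) := by
    intro k
    rw [show Finset.Icc 1 (k+1) = Finset.Ico 1 (k+2) by
      ext x; simp [Finset.mem_Icc, Finset.mem_Ico]; omega]
    rw [Finset.sum_Ico_eq_sum_range]
    rw [show k + 2 - 1 = k + 1 by omega]
    apply Finset.sum_congr rfl
    intro m _
    push_cast
    ring_nf
  have h1 : ∀ k : ℕ,
      (-1 : ℚ) ^ (n - k) * (stirlingSecond (n + 1) (k + 1) : ℚ) * (Nat.factorial k : ℚ) *
        (∑ j ∈ Finset.Icc 1 (k+1), ((j : ℚ)) ^ (-p))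
      = ∑ m ∈ Finset.range (k+1),
          (-1 : ℚ) ^ (n - k) * (stirlingSecond (n + 1) (k + 1) : ℚ) * (Nat.factorial k : ℚ) *
            (((m : ℚ) + 1) ^ (-p)) := by
    intro k
    rw [h0 k, Finset.mul_sum]
  rw [Finset.sum_congr rfl (fun k _ => h1 k)]
  simp only [Finset.range_eq_Ico]
  rw [← Finset.sum_Ico_Ico_comm]
  apply Finset.sum_congr rfl
  intro m hm
  have hmn : m ≤ n := by simp [Finset.mem_Ico] at hm; omega
  have hIcc : Finset.Ico m (n+1) = Finset.Icc m n := by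
    ext x; simp [Finset.mem_Icc, Finset.mem_Ico]
  rw [hIcc]
  have hsum : ∑ k ∈ Finset.Icc m n,
      (-1 : ℚ) ^ (n - k) * (stirlingSecond (n + 1) (k + 1) : ℚ) * (Nat.factorial k : ℚ) *
        (((m : ℚ) + 1) ^ (-p))
      = ((-1:ℚ)^n * (((m : ℚ) + 1) ^ (-p))) *
        ∑ k ∈ Finset.Icc m n, (-1:ℚ)^k * (Nat.factorial k) * (stirlingSecond (n+1) (k+1)) := by
    rw [Finset.mul_sum]
    apply Finset.sum_congr rfl
    intro k hk
    have hkn : k ≤ n := (Finset.mem_Icc.mp hk).2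
    have hneg : (-1:ℚ)^(n-k) = (-1:ℚ)^n * (-1:ℚ)^k := by
      have : (-1:ℚ)^(n-k) * (-1:ℚ)^k = (-1:ℚ)^n := by
        rw [← pow_add]; congr 1; omega
      have hk2 : (-1:ℚ)^k * (-1:ℚ)^k = 1 := by
        rw [← pow_add, ← two_mul, pow_mul]; norm_num
      calc (-1:ℚ)^(n-k) = (-1:ℚ)^(n-k) * ((-1:ℚ)^k * (-1:ℚ)^k) := by rw [hk2, mul_one]
        _ = (-1:ℚ)^n * (-1:ℚ)^k := by rw [← mul_assoc, this]
    rw [hneg]; ring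
  rw [hsum, key n (n - m) m hmn rfl]
  rw [zpow_neg, div_eq_mul_inv]
  push_cast [pow_add]
  ring
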